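/- Let f_1, …, f_n (n ≥ 2) be homogeneous polynomials of positive degree in R = K[x_0, x_1, …, x_n], where f_j = ∏_{i=1}^{ℓ_j} L_{j,i} is a product of linear forms satisfying condition (α). Then the ideal generated by the pairwise products, (f_i f_j : 1 ≤ i < j ≤ n), equals the intersection ⋂_{k=1}^n (f_1, …, f_{k−1}, f_{k+1}, …, f_n) of the n ideals generated by all but one of the f_j. -/

import Mathlib

open MvPolynomial

lemma finsupp_degree_one {σ : Type*} [DecidableEq σ] (d : σ →₀ ℕ) (h : Finsupp.degree d = 1) :
    ∃ i, d = Finsupp.single i 1 := by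
  have hd0 : d ≠ 0 := by
    intro h0; rw [h0, map_zero] at h; omega
  obtain ⟨i, hi⟩ : ∃ i, i ∈ d.support := by
    by_contra hc
    push_neg at hc
    exact hd0 (Finsupp.support_eq_empty.mp (Finset.eq_empty_iff_forall_notMem.mpr hc))
  have hsum : d i + ∑ j ∈ d.support.erase i, d j = 1 := by
    rw [Finset.add_sum_erase _ _ hi]; exact h
  have hdi : 1 ≤ d i := Nat.one_le_iff_ne_zero.mpr (Finsupp.mem_support_iff.mp hi)
  have hrest : ∑ j ∈ d.support.erase i, d j = 0 := by omega
  have hdi1 : d i = 1 := by omega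
  refine ⟨i, ?_⟩
  ext j
  rcases eq_or_ne j i with rfl | hj
  · simp [hdi1]
  · rw [Finsupp.single_apply, if_neg (Ne.symm hj)]
    by_contra hne
    have hjs : j ∈ d.support.erase i := by
      simp [Finsupp.mem_support_iff, hne, hj]
    have := Finset.sum_eq_zero_iff.mp hrest j hjs
    exact hne this

lemma hom1_mem_spanX {K : Type} [Field K] {N : ℕ} (p : MvPolynomial (Fin N) K)
    (hp : p.IsHomogeneous 1) :
    p ∈ Submodule.span K (Set.range (X : Fin N → MvPolynomial (Fin N) K)) := by
  rw [p.as_sum]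
  refine Submodule.sum_mem _ (fun m hm => ?_)
  obtain ⟨i, rfl⟩ := finsupp_degree_one m (by rw [Finsupp.degree_eq_weight_one]; exact hp (mem_support_iff.mp hm))
  have : monomial (Finsupp.single i 1) (coeff (Finsupp.single i 1) p)
      = (coeff (Finsupp.single i 1) p) • X i := by
    rw [smul_eq_C_mul, X, C_mul_monomial, mul_one]
  rw [this]
  exact Submodule.smul_mem _ _ (Submodule.subset_span ⟨i, rfl⟩)

lemma nzd_base {K : Type} [Field K] {N : ℕ} {τ : Type} (M : τ → MvPolynomial (Fin N) K)
    (L : MvPolynomial (Fin N) K)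
    (hM : ∀ s, M s ∈ Submodule.span K (Set.range (X : Fin N → MvPolynomial (Fin N) K)))
    (hL : L ∈ Submodule.span K (Set.range (X : Fin N → MvPolynomial (Fin N) K)))
    (hL0 : L ≠ 0) (hLW : L ∉ Submodule.span K (Set.range M)) :
    ∀ h, h * L ∈ Ideal.span (Set.range M) → h ∈ Ideal.span (Set.range M) := by
  intro h hmem
  set W : Submodule K (MvPolynomial (Fin N) K) := Submodule.span K (Set.range M) with hWdef
  obtain ⟨Cc, hCc⟩ := Submodule.exists_isCompl (W ⊔ Submodule.span K {L})
  set U : Submodule K (MvPolynomial (Fin N) K) := Submodule.span K {L} ⊔ Cc with hUdef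
  have hLU : L ∈ U := le_sup_left (α := Submodule K (MvPolynomial (Fin N) K))
    (Submodule.mem_span_singleton_self L)
  have hcompl : IsCompl W U := by
    constructor
    · rw [disjoint_iff_inf_le]
      rintro x ⟨hxW, hxU⟩
      obtain ⟨y, hy, c, hc, rfl⟩ := Submodule.mem_sup.mp hxU
      obtain ⟨t, rfl⟩ := Submodule.mem_span_singleton.mp hy
      have hcW' : c ∈ W ⊔ Submodule.span K {L} := by
        have h1 : t • L + c - t • L ∈ W ⊔ Submodule.span K {L} := by
          refine sub_mem (le_sup_left (α := Submodule K (MvPolynomial (Fin N) K)) hxW) ?_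
          exact le_sup_right (α := Submodule K (MvPolynomial (Fin N) K))
            (Submodule.smul_mem _ _ (Submodule.mem_span_singleton_self L))
        simpa using h1
      have hc0 : c = 0 := by
        have hd := hCc.disjoint
        rw [disjoint_iff_inf_le] at hd
        exact hd ⟨hcW', hc⟩
      subst hc0
      rw [add_zero] at hxW ⊢
      rcases eq_or_ne t 0 with rfl | ht
      · simp
      · exfalso
        apply hLW
        have h2 : t⁻¹ • (t • L) ∈ W := Submodule.smul_mem _ _ hxW
        rwa [smul_smul, inv_mul_cancel₀ ht, one_smul] at h2
    · rw [codisjoint_iff]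
      rw [hUdef, ← sup_assoc]
      exact codisjoint_iff.mp hCc.codisjoint
  set P := Submodule.linearProjOfIsCompl W U hcompl with hPdef
  set π : MvPolynomial (Fin N) K →ₐ[K] MvPolynomial (Fin N) K :=
    aeval (fun i => X i - (P (X i) : MvPolynomial (Fin N) K)) with hπdef
  have hπX : ∀ i, π (X i) = X i - (P (X i) : MvPolynomial (Fin N) K) := fun i => aeval_X _ i
  have key1 : ∀ v ∈ Submodule.span K (Set.range (X : Fin N → MvPolynomial (Fin N) K)),
      π v = v - (P v : MvPolynomial (Fin N) K) := by
    intro v hv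
    induction hv using Submodule.span_induction with
    | mem x hx =>
      obtain ⟨i, rfl⟩ := hx
      exact hπX i
    | zero => simp
    | add x y _ _ hx hy => rw [map_add, hx, hy, map_add]; push_cast; ring
    | smul a x _ hx => rw [map_smul, hx, map_smul]; push_cast [smul_sub]; ring_nf
  have hWJ : ∀ w ∈ W, w ∈ Ideal.span (Set.range M) := by
    intro w hw
    have hle : W ≤ Submodule.restrictScalars K (Ideal.span (Set.range M)) := by
      rw [hWdef, Submodule.span_le]
      exact fun x hx => Ideal.subset_span hx
    exact hle hw
  have key2 : ∀ p : MvPolynomial (Fin N) K, p - π p ∈ Ideal.span (Set.range M) := by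
    intro p
    induction p using MvPolynomial.induction_on with
    | C a =>
      have : π (C a) = C a := by simp [hπdef, algHom_C]
      rw [this, sub_self]
      exact Ideal.zero_mem _
    | add p q hp hq =>
      have : p + q - π (p + q) = (p - π p) + (q - π q) := by rw [map_add]; ring
      rw [this]; exact add_mem hp hq
    | mul_X p i hp =>
      have heq : p * X i - π (p * X i)
          = (p - π p) * X i + π p * (P (X i) : MvPolynomial (Fin N) K) := by
        rw [map_mul, hπX]; ring
      rw [heq]
      exact add_mem (Ideal.mul_mem_right _ _ hp)
        (Ideal.mul_mem_left _ _ (hWJ _ (P (X i)).2))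
  have hπM : ∀ s, π (M s) = 0 := by
    intro s
    rw [key1 _ (hM s)]
    have hP : P (M s) = ⟨M s, Submodule.subset_span ⟨s, rfl⟩⟩ :=
      Submodule.linearProjOfIsCompl_apply_left hcompl ⟨M s, Submodule.subset_span ⟨s, rfl⟩⟩
    rw [hP, sub_self]
  have hπL : π L = L := by
    rw [key1 _ hL, show P L = 0 from Submodule.linearProjOfIsCompl_apply_right' hcompl hLU]
    simp
  have hπhL : π (h * L) = 0 := by
    have h1 : π (h * L) ∈ Ideal.map π (Ideal.span (Set.range M)) :=
      Ideal.mem_map_of_mem _ hmem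
    rw [Ideal.map_span] at h1
    have h2 : (⇑π '' Set.range M) ⊆ {0} := by
      rintro x ⟨y, ⟨s, rfl⟩, rfl⟩
      exact hπM s
    have h4 := Ideal.span_mono h2 h1
    rwa [Ideal.span_singleton_eq_bot.mpr rfl, Ideal.mem_bot] at h4
  rw [map_mul, hπL] at hπhL
  rcases mul_eq_zero.mp hπhL with h0 | h0
  · have h5 := key2 h
    rwa [h0, sub_zero] at h5
  · exact absurd h0 hL0

lemma nzd_prod {R : Type*} [CommRing R] (I : Ideal R) {β : Type*} (s : Finset β) (v : β → R)
    (hv : ∀ i ∈ s, ∀ h, h * v i ∈ I → h ∈ I) :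
    ∀ h, h * ∏ i ∈ s, v i ∈ I → h ∈ I := by
  classical
  induction s using Finset.induction with
  | empty => intro h hh; simpa using hh
  | insert _ _ hx ih =>
    rename_i a t
    intro h hh
    rw [Finset.prod_insert hx] at hh
    have h1 : (h * ∏ i ∈ t, v i) * v a ∈ I := by
      have : (h * ∏ i ∈ t, v i) * v a = h * (v a * ∏ x ∈ t, v x) := by ring
      rw [this]; exact hh
    have h2 := hv a (Finset.mem_insert_self a t) _ h1
    exact ih (fun i hi => hv i (Finset.mem_insert_of_mem hi)) _ h2

lemma nzd_isEmpty {K : Type} [Field K] {N : ℕ} {ι τ : Type} [IsEmpty ι]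
    (ℓ : ι → ℕ) (Λ : (j : ι) → Fin (ℓ j) → MvPolynomial (Fin N) K)
    (M : τ → MvPolynomial (Fin N) K) (L : MvPolynomial (Fin N) K)
    (hM : ∀ s, M s ∈ Submodule.span K (Set.range (X : Fin N → MvPolynomial (Fin N) K)))
    (hL : L ∈ Submodule.span K (Set.range (X : Fin N → MvPolynomial (Fin N) K)))
    (hind : ∀ c : (j : ι) → Fin (ℓ j), LinearIndependent K
      (Sum.elim M (Sum.elim (fun j => Λ j (c j)) (fun _ : Unit => L)))) :
    ∀ h, h * L ∈ Ideal.span (Set.range M ∪ Set.range (fun j : ι => ∏ i, Λ j i)) →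
      h ∈ Ideal.span (Set.range M ∪ Set.range (fun j : ι => ∏ i, Λ j i)) := by
  rw [Set.range_eq_empty (fun j : ι => ∏ i, Λ j i), Set.union_empty]
  have li := hind (fun j => isEmptyElim j)
  have hL0 : L ≠ 0 := by
    simpa using li.ne_zero (Sum.inr (Sum.inr ()))
  have hLW : L ∉ Submodule.span K (Set.range M) := by
    have h1 := li.notMem_span_image
      (s := Set.range (Sum.inl : τ → τ ⊕ (ι ⊕ Unit)))
      (x := Sum.inr (Sum.inr ())) (by simp)
    rw [← Set.range_comp, Sum.elim_comp_inl] at h1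
    exact h1
  exact nzd_base M L hM hL hL0 hLW

lemma nzd_main {K : Type} [Field K] {N : ℕ} (m : ℕ) :
    ∀ (ι : Type) (_ : Fintype ι), Fintype.card ι ≤ m →
    ∀ (ℓ : ι → ℕ) (Λ : (j : ι) → Fin (ℓ j) → MvPolynomial (Fin N) K)
      (τ : Type) (M : τ → MvPolynomial (Fin N) K) (L : MvPolynomial (Fin N) K),
      (∀ j i, Λ j i ∈ Submodule.span K (Set.range (X : Fin N → MvPolynomial (Fin N) K))) →
      (∀ s, M s ∈ Submodule.span K (Set.range (X : Fin N → MvPolynomial (Fin N) K))) →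
      (L ∈ Submodule.span K (Set.range (X : Fin N → MvPolynomial (Fin N) K))) →
      (∀ c : (j : ι) → Fin (ℓ j), LinearIndependent K
        (Sum.elim M (Sum.elim (fun j => Λ j (c j)) (fun _ : Unit => L)))) →
      ∀ h, h * L ∈ Ideal.span (Set.range M ∪ Set.range (fun j : ι => ∏ i, Λ j i)) →
        h ∈ Ideal.span (Set.range M ∪ Set.range (fun j : ι => ∏ i, Λ j i)) := by
  induction m with
  | zero =>
    intro ι hfin hcard ℓ Λ τ M L hΛ hM hL hind h hh
    haveI : IsEmpty ι := Fintype.card_eq_zero_iff.mp (Nat.le_zero.mp hcard)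
    exact nzd_isEmpty ℓ Λ M L hM hL hind h hh
  | succ m IH =>
    intro ι hfin hcard ℓ Λ τ M L hΛ hM hL hind h hh
    haveI := Classical.decEq ι
    by_cases hempty : IsEmpty ι
    · exact nzd_isEmpty ℓ Λ M L hM hL hind h hh
    haveI : Nonempty ι := not_isEmpty_iff.mp hempty
    by_cases hdeg : ∀ j, 0 < ℓ j
    swap
    · -- some row is empty: the ideal is the whole ring
      push_neg at hdeg
      obtain ⟨j₁, hj₁⟩ := hdeg
      haveI : IsEmpty (Fin (ℓ j₁)) := ⟨fun x => absurd x.2 (by omega)⟩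
      have hone : (1 : MvPolynomial (Fin N) K)
          ∈ Ideal.span (Set.range M ∪ Set.range (fun j : ι => ∏ i, Λ j i)) := by
        apply Ideal.subset_span
        right
        exact ⟨j₁, by simp⟩
      have htop : Ideal.span (Set.range M ∪ Set.range (fun j : ι => ∏ i, Λ j i)) = ⊤ :=
        (Ideal.eq_top_iff_one _).mpr hone
      rw [htop]; exact Submodule.mem_top
    obtain ⟨j₀⟩ := ‹Nonempty ι›
    set G : ι → MvPolynomial (Fin N) K := fun j => ∏ i, Λ j i with hGdef
    set g := G j₀ with hgdef
    set I' : Ideal (MvPolynomial (Fin N) K) :=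
      Ideal.span (Set.range M ∪ G '' {j | j ≠ j₀}) with hI'def
    have hrange : Set.range G = G '' {j | j ≠ j₀} ∪ {g} := by
      ext x
      constructor
      · rintro ⟨j, rfl⟩
        rcases eq_or_ne j j₀ with rfl | hj
        · right; rfl
        · left; exact ⟨j, hj, rfl⟩
      · rintro (⟨j, _, rfl⟩ | rfl)
        · exact ⟨j, rfl⟩
        · exact ⟨j₀, rfl⟩
    have hIsplit : Ideal.span (Set.range M ∪ Set.range G) = I' ⊔ Ideal.span {g} := by
      rw [hrange, ← Set.union_assoc, Ideal.span_union]
    -- the subtype of remaining rows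
    have hcard' : Fintype.card {j : ι // j ≠ j₀} ≤ m := by
      have h2 : Fintype.card {j : ι // j ≠ j₀} < Fintype.card ι :=
        Fintype.card_subtype_lt (x := j₀) (by simp)
      omega
    set M' : (τ ⊕ Unit) → MvPolynomial (Fin N) K := Sum.elim M (fun _ => L) with hM'def
    set G' : {j : ι // j ≠ j₀} → MvPolynomial (Fin N) K := fun j' => ∏ i, Λ j'.val i
      with hG'def
    have hrangeG' : Set.range G' = G '' {j | j ≠ j₀} := by
      have h3 : Set.range G' = Set.range (G ∘ (Subtype.val : {j : ι // j ≠ j₀} → ι)) := rfl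
      rw [h3, Set.range_comp, Subtype.range_coe_subtype]
    have hrangeM' : Set.range M' = Set.range M ∪ {L} := by
      rw [hM'def, Set.Sum.elim_range]
      congr 1
      exact Set.range_const
    have hI'' : Ideal.span (Set.range M' ∪ Set.range G') = I' ⊔ Ideal.span {L} := by
      rw [hrangeM', hrangeG', hI'def]
      rw [Set.union_right_comm, Ideal.span_union]
    -- decompose h * L
    rw [hIsplit] at hh
    obtain ⟨y, hy, z, hz, hyz⟩ := Submodule.mem_sup.mp hh
    obtain ⟨a, ha⟩ := Ideal.mem_span_singleton'.mp hz
    have hag : a * g ∈ I' ⊔ Ideal.span {L} := by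
      have h1 : a * g = h * L - y := by rw [← hyz, ha]; ring
      rw [h1]
      exact sub_mem (le_sup_right (α := Ideal (MvPolynomial (Fin N) K))
        (Ideal.mem_span_singleton'.mpr ⟨h, rfl⟩))
        (le_sup_left (α := Ideal (MvPolynomial (Fin N) K)) hy)
    -- step 1 : each factor of g is a nonzerodivisor mod I' ⊔ (L)
    have hfac : ∀ i₀ : Fin (ℓ j₀), ∀ h', h' * Λ j₀ i₀ ∈ I' ⊔ Ideal.span {L} →
        h' ∈ I' ⊔ Ideal.span {L} := by
      intro i₀ h' hmem'
      rw [← hI''] at hmem' ⊢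
      refine IH {j : ι // j ≠ j₀} inferInstance hcard' (fun j' => ℓ j'.val)
        (fun j' => Λ j'.val) (τ ⊕ Unit) M' (Λ j₀ i₀) (fun j' i => hΛ j'.val i)
        ?_ (hΛ j₀ i₀) ?_ h' hmem'
      · rintro (t | u)
        · exact hM t
        · exact hL
      · intro c'
        set c : (j : ι) → Fin (ℓ j) :=
          Function.update (fun j => if hne : j ≠ j₀ then c' ⟨j, hne⟩ else ⟨0, hdeg j⟩) j₀ i₀
          with hcdef
        have main := hind c
        set F : (τ ⊕ Unit) ⊕ ({j : ι // j ≠ j₀} ⊕ Unit) → τ ⊕ (ι ⊕ Unit) :=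
          Sum.elim (Sum.elim (fun t => Sum.inl t) (fun _ => Sum.inr (Sum.inr ())))
            (Sum.elim (fun j' => Sum.inr (Sum.inl j'.val)) (fun _ => Sum.inr (Sum.inl j₀)))
          with hFdef
        have hFinj : Function.Injective F := by
          rintro ((t₁ | ⟨⟩) | (j₁ | ⟨⟩)) ((t₂ | ⟨⟩) | (j₂ | ⟨⟩)) hxy <;>
            rw [hFdef] at hxy <;>
            simp only [Sum.elim_inl, Sum.elim_inr, Sum.inl.injEq, Sum.inr.injEq] at hxy <;>
            first
              | rfl
              | (exact absurd hxy j₁.2)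
              | (exact absurd hxy.symm j₂.2)
              | (exact congrArg (fun t => Sum.inl (Sum.inl t)) hxy)
              | (exact congrArg (fun t => Sum.inr (Sum.inl t)) (Subtype.ext hxy))
              | (cases hxy)
        have hkey : ∀ x, (Sum.elim M' (Sum.elim (fun j' : {j : ι // j ≠ j₀} =>
              Λ j'.val (c' j')) (fun _ : Unit => Λ j₀ i₀))) x
            = (Sum.elim M (Sum.elim (fun j => Λ j (c j)) (fun _ : Unit => L))) (F x) := by
          rintro ((t | ⟨⟩) | (j' | ⟨⟩))
          · rfl
          · rfl
          · rw [hFdef]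
            show Λ j'.val (c' j') = Λ j'.val (c j'.val)
            have hcval : c j'.val = c' j' := by
              rw [hcdef, Function.update_of_ne j'.2, dif_pos j'.2]
            exact congrArg (Λ j'.val) hcval.symm
          · rw [hFdef]
            show Λ j₀ i₀ = Λ j₀ (c j₀)
            have hcj₀ : c j₀ = i₀ := by rw [hcdef, Function.update_self]
            rw [hcj₀]
        have hfe : (Sum.elim M' (Sum.elim (fun j' : {j : ι // j ≠ j₀} =>
              Λ j'.val (c' j')) (fun _ : Unit => Λ j₀ i₀)))
            = (Sum.elim M (Sum.elim (fun j => Λ j (c j)) (fun _ : Unit => L))) ∘ F :=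
          funext hkey
        rw [hfe]
        exact main.comp F hFinj
    have hag2 : a ∈ I' ⊔ Ideal.span {L} :=
      nzd_prod _ Finset.univ (Λ j₀) (fun i _ => hfac i) a hag
    obtain ⟨z₂, hz₂, w, hw, hzw⟩ := Submodule.mem_sup.mp hag2
    obtain ⟨d, hd⟩ := Ideal.mem_span_singleton'.mp hw
    have heq : (h - d * g) * L = y + z₂ * g := by
      have e1 : h * L = y + a * g := by rw [← hyz, ha]
      have e2 : z₂ + d * L = a := by rw [← hd] at hzw; exact hzw
      linear_combination e1 - g * e2
    -- step 2 : h - d * g ∈ I'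
    have hstep2 : h - d * g ∈ I' := by
      have hI2 : Ideal.span (Set.range M ∪ Set.range G') = I' := by
        rw [hrangeG', hI'def]
      rw [← hI2]
      refine IH {j : ι // j ≠ j₀} inferInstance hcard' (fun j' => ℓ j'.val)
        (fun j' => Λ j'.val) τ M L (fun j' i => hΛ j'.val i) hM hL ?_ (h - d * g) ?_
      · intro c'
        set c : (j : ι) → Fin (ℓ j) :=
          (fun j => if hne : j ≠ j₀ then c' ⟨j, hne⟩ else ⟨0, hdeg j⟩) with hcdef
        have main := hind c
        set F : τ ⊕ ({j : ι // j ≠ j₀} ⊕ Unit) → τ ⊕ (ι ⊕ Unit) :=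
          Sum.elim (fun t => Sum.inl t)
            (Sum.elim (fun j' => Sum.inr (Sum.inl j'.val)) (fun _ => Sum.inr (Sum.inr ())))
          with hFdef
        have hFinj : Function.Injective F := by
          rintro (t₁ | (j₁ | ⟨⟩)) (t₂ | (j₂ | ⟨⟩)) hxy <;>
            rw [hFdef] at hxy <;>
            simp only [Sum.elim_inl, Sum.elim_inr, Sum.inl.injEq, Sum.inr.injEq] at hxy <;>
            first
              | rfl
              | (exact congrArg (fun t => Sum.inl t) hxy)
              | (exact congrArg (fun t => Sum.inr (Sum.inl t)) (Subtype.ext hxy))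
              | (cases hxy)
        have hkey : ∀ x, (Sum.elim M (Sum.elim (fun j' : {j : ι // j ≠ j₀} =>
              Λ j'.val (c' j')) (fun _ : Unit => L))) x
            = (Sum.elim M (Sum.elim (fun j => Λ j (c j)) (fun _ : Unit => L))) (F x) := by
          rintro (t | (j' | ⟨⟩))
          · rfl
          · rw [hFdef]
            show Λ j'.val (c' j') = Λ j'.val (c j'.val)
            have hcval : c j'.val = c' j' := by
              show (if hne : (j' : ι) ≠ j₀ then c' ⟨j'.val, hne⟩ else ⟨0, hdeg j'.val⟩) = c' j'
              rw [dif_pos j'.2]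
            exact congrArg (Λ j'.val) hcval.symm
          · rfl
        have hfe : (Sum.elim M (Sum.elim (fun j' : {j : ι // j ≠ j₀} =>
              Λ j'.val (c' j')) (fun _ : Unit => L)))
            = (Sum.elim M (Sum.elim (fun j => Λ j (c j)) (fun _ : Unit => L))) ∘ F :=
          funext hkey
        rw [hfe]
        exact main.comp F hFinj
      · rw [hI2, heq]
        exact Submodule.add_mem _ hy (Ideal.mul_mem_right _ _ hz₂)
    -- conclude
    rw [hIsplit]
    have hfinal : h = (h - d * g) + d * g := by ring
    rw [hfinal]
    exact Submodule.add_mem _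
      (le_sup_left (α := Ideal (MvPolynomial (Fin N) K)) hstep2)
      (le_sup_right (α := Ideal (MvPolynomial (Fin N) K))
        (Ideal.mem_span_singleton'.mpr ⟨d, rfl⟩))

lemma inter_le_pairwise {R : Type*} [CommRing R] (m : ℕ) :
    ∀ (ι : Type) (_ : Fintype ι) (_ : Nonempty ι), Fintype.card ι ≤ m →
    ∀ (f : ι → R) (Q : Ideal R),
      (∀ (k : ι) (h : R), h * f k ∈ Q ⊔ Ideal.span (f '' {j | j ≠ k}) →
        h ∈ Q ⊔ Ideal.span (f '' {j | j ≠ k})) →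
      (⨅ k : ι, Q ⊔ Ideal.span (f '' {j | j ≠ k})) ≤
        Q ⊔ Ideal.span {p | ∃ i j : ι, i ≠ j ∧ p = f i * f j} := by
  induction m with
  | zero =>
    intro ι hfin hne hcard
    have := Fintype.card_pos (α := ι)
    omega
  | succ m IH =>
    intro ι hfin hne hcard f Q hreg
    haveI := Classical.decEq ι
    obtain ⟨k₀⟩ := hne
    by_cases hsub : ∀ j : ι, j = k₀
    · intro x hx
      have h1 : x ∈ Q ⊔ Ideal.span (f '' {j | j ≠ k₀}) := by
        exact (Submodule.mem_iInf _).mp hx k₀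
      have hempty : {j : ι | j ≠ k₀} = ∅ := by
        ext j; simp [hsub j]
      rw [hempty, Set.image_empty, Ideal.span_empty, sup_bot_eq] at h1
      exact le_sup_left (α := Ideal R) h1
    · push_neg at hsub
      obtain ⟨k₁, hk₁⟩ := hsub
      haveI : Nonempty {j : ι // j ≠ k₀} := ⟨⟨k₁, hk₁⟩⟩
      have hcard' : Fintype.card {j : ι // j ≠ k₀} ≤ m := by
        have h2 : Fintype.card {j : ι // j ≠ k₀} < Fintype.card ι :=
          Fintype.card_subtype_lt (x := k₀) (by simp)
        omega
      set f' : {j : ι // j ≠ k₀} → R := fun j' => f j'.val with hf'def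
      set Q' : Ideal R := Q ⊔ Ideal.span {f k₀} with hQ'def
      have hident : ∀ k' : {j : ι // j ≠ k₀},
          Q' ⊔ Ideal.span (f' '' {j' | j' ≠ k'}) =
            Q ⊔ Ideal.span (f '' {j | j ≠ k'.val}) := by
        intro k'
        have himg : f' '' {j' | j' ≠ k'} = f '' {j | j ≠ k'.val ∧ j ≠ k₀} := by
          ext x
          constructor
          · rintro ⟨⟨j, hj⟩, hne', rfl⟩
            exact ⟨j, ⟨fun hc => hne' (Subtype.ext hc), hj⟩, rfl⟩
          · rintro ⟨j, ⟨h1, h2⟩, rfl⟩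
            exact ⟨⟨j, h2⟩, fun hc => h1 (congrArg Subtype.val hc), rfl⟩
        have hins : {j : ι | j ≠ k'.val} = insert k₀ {j | j ≠ k'.val ∧ j ≠ k₀} := by
          ext j
          constructor
          · intro hj
            rcases eq_or_ne j k₀ with rfl | hj₀
            · exact Set.mem_insert _ _
            · exact Set.mem_insert_of_mem _ ⟨hj, hj₀⟩
          · rintro (rfl | ⟨h1, h2⟩)
            · exact fun hc => k'.2 hc.symm
            · exact h1
        rw [himg, hins, Set.image_insert_eq, Ideal.span_insert, hQ'def, sup_assoc]
      have hreg' : ∀ (k' : {j : ι // j ≠ k₀}) (h : R),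
          h * f' k' ∈ Q' ⊔ Ideal.span (f' '' {j' | j' ≠ k'}) →
            h ∈ Q' ⊔ Ideal.span (f' '' {j' | j' ≠ k'}) := by
        intro k' h hh
        rw [hident k'] at hh ⊢
        exact hreg k'.val h hh
      have hIH := IH {j : ι // j ≠ k₀} inferInstance inferInstance hcard' f' Q' hreg'
      intro x hx
      have hx' : ∀ k : ι, x ∈ Q ⊔ Ideal.span (f '' {j | j ≠ k}) :=
        fun k => (Submodule.mem_iInf _).mp hx k
      have hxi : x ∈ ⨅ k' : {j : ι // j ≠ k₀}, Q' ⊔ Ideal.span (f' '' {j' | j' ≠ k'}) := by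
        refine (Submodule.mem_iInf _).mpr (fun k' => ?_)
        rw [hident k']
        exact hx' k'.val
      have h2 := hIH hxi
      obtain ⟨q1', hq1', p, hp, hsum⟩ := Submodule.mem_sup.mp h2
      obtain ⟨q1, hq1, zg, hzg, hq1sum⟩ := Submodule.mem_sup.mp hq1'
      obtain ⟨a, ha⟩ := Ideal.mem_span_singleton'.mp hzg
      -- p is in both span J and span (f '' {j ≠ k₀})
      have hpJ : p ∈ Ideal.span {q | ∃ i j : ι, i ≠ j ∧ q = f i * f j} := by
        refine Ideal.span_le.mpr ?_ hp
        rintro q ⟨i', j', hne', rfl⟩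
        exact Ideal.subset_span ⟨i'.val, j'.val,
          fun hc => hne' (Subtype.ext hc), rfl⟩
      have hpK : p ∈ Ideal.span (f '' {j | j ≠ k₀}) := by
        refine Ideal.span_le.mpr ?_ hp
        rintro q ⟨i', j', hne', rfl⟩
        exact Ideal.mul_mem_left _ _ (Ideal.subset_span ⟨j'.val, j'.2, rfl⟩)
      have hafk : a * f k₀ ∈ Q ⊔ Ideal.span (f '' {j | j ≠ k₀}) := by
        have he : a * f k₀ = x - q1 - p := by
          rw [ha, ← hsum, ← hq1sum]; ring
        rw [he]
        exact sub_mem (sub_mem (hx' k₀) (le_sup_left (α := Ideal R) hq1))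
          (le_sup_right (α := Ideal R) hpK)
      have ha2 := hreg k₀ a hafk
      have hbfk' : ∀ b ∈ Ideal.span (f '' {j | j ≠ k₀}),
          b * f k₀ ∈ Ideal.span {q | ∃ i j : ι, i ≠ j ∧ q = f i * f j} := by
        intro b hb
        induction hb using Submodule.span_induction with
        | mem v hv =>
          obtain ⟨j, hj, rfl⟩ := hv
          exact Ideal.subset_span ⟨j, k₀, hj, rfl⟩
        | zero => rw [zero_mul]; exact Ideal.zero_mem _
        | add v w _ _ hv hw => rw [add_mul]; exact Submodule.add_mem _ hv hw
        | smul r v _ hv =>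
          rw [smul_mul_assoc]
          exact Submodule.smul_mem _ r hv
      obtain ⟨q2, hq2, b, hb, hab⟩ := Submodule.mem_sup.mp ha2
      have hbfk := hbfk' b hb
      have hxeq : x = (q1 + q2 * f k₀) + (b * f k₀ + p) := by
        rw [← hsum, ← hq1sum, ← ha, ← hab]; ring
      rw [hxeq]
      refine Submodule.add_mem _ ?_ ?_
      · exact le_sup_left (α := Ideal R)
          (Submodule.add_mem _ hq1 (Ideal.mul_mem_right _ _ hq2))
      · exact le_sup_right (α := Ideal R) (Submodule.add_mem _ hbfk hpJ)


/-- For linear forms `L j i` in `R = K[x_0,…,x_n]` satisfying condition (α)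
(every selection of one form per row is `K`-linearly independent), with
`f j = ∏ i, L j i` homogeneous of positive degree, the ideal generated by the
pairwise products `f i * f j` (`i < j`) equals the intersection of the `n` ideals
generated by all but one of the `f j`. -/
theorem grid_ideal_eq_inter_of_condition_alpha
    (K : Type) [Field K] [Infinite K] (n : ℕ) (hn : 2 ≤ n)
    (ℓ : Fin n → ℕ) (hℓ : ∀ j, 0 < ℓ j)
    (L : (j : Fin n) → Fin (ℓ j) → MvPolynomial (Fin (n + 1)) K)
    (hLhom : ∀ j i, (L j i).IsHomogeneous 1)
    (hα : ∀ c : (j : Fin n) → Fin (ℓ j), LinearIndependent K (fun j => L j (c j)))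
    (f : Fin n → MvPolynomial (Fin (n + 1)) K)
    (hf : ∀ j, f j = ∏ i : Fin (ℓ j), L j i) :
    Ideal.span {g : MvPolynomial (Fin (n + 1)) K | ∃ i j : Fin n, i < j ∧ g = f i * f j} =
      ⨅ k : Fin n, Ideal.span (f '' {j : Fin n | j ≠ k}) := by
  classical
  -- the two descriptions of the pairwise-product ideal agree
  have hspan : Ideal.span {g : MvPolynomial (Fin (n + 1)) K | ∃ i j : Fin n, i ≠ j ∧ g = f i * f j}
      = Ideal.span {g : MvPolynomial (Fin (n + 1)) K | ∃ i j : Fin n, i < j ∧ g = f i * f j} := by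
    apply le_antisymm <;> refine Ideal.span_le.mpr ?_
    · rintro g ⟨i, j, hij, rfl⟩
      rcases lt_trichotomy i j with hlt | heq | hgt
      · exact Ideal.subset_span ⟨i, j, hlt, rfl⟩
      · exact absurd heq hij
      · exact Ideal.subset_span ⟨j, i, hgt, mul_comm (f i) (f j)⟩
    · rintro g ⟨i, j, hij, rfl⟩
      exact Ideal.subset_span ⟨i, j, ne_of_lt hij, rfl⟩
  -- regularity of each f k modulo the ideal of the others
  have hreg0 : ∀ (k : Fin n) (h : MvPolynomial (Fin (n + 1)) K),
      h * f k ∈ Ideal.span (f '' {j | j ≠ k}) → h ∈ Ideal.span (f '' {j | j ≠ k}) := by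
    intro k h hh
    rw [hf k] at hh
    refine nzd_prod _ Finset.univ (L k) (fun i₀ _ => ?_) h hh
    -- each linear factor of f k is a nonzerodivisor modulo (f j : j ≠ k)
    intro h' hh'
    have himg : (fun j : {j : Fin n // j ≠ k} => ∏ i, L j.val i) =
        (fun j' : {j : Fin n // j ≠ k} => f j'.val) := by
      funext j'; rw [hf]
    have hIeq : Ideal.span (Set.range (fun e : Empty => e.elim) ∪
        Set.range (fun j' : {j : Fin n // j ≠ k} => ∏ i, L j'.val i)) =
        Ideal.span (f '' {j | j ≠ k}) := by
      rw [Set.range_eq_empty, Set.empty_union, himg]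
      congr 1
      have : Set.range (fun j' : {j : Fin n // j ≠ k} => f j'.val)
          = Set.range (f ∘ (Subtype.val : {j : Fin n // j ≠ k} → Fin n)) := rfl
      rw [this, Set.range_comp, Subtype.range_coe_subtype]
    rw [← hIeq] at hh' ⊢
    refine nzd_main n {j : Fin n // j ≠ k} inferInstance ?_
      (fun j' => ℓ j'.val) (fun j' => L j'.val) Empty (fun e => e.elim) (L k i₀)
      (fun j' i => hom1_mem_spanX _ (hLhom j'.val i)) (fun e => e.elim)
      (hom1_mem_spanX _ (hLhom k i₀)) ?_ h' hh'
    · calc Fintype.card {j : Fin n // j ≠ k} ≤ Fintype.card (Fin n) :=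
            Fintype.card_subtype_le _
        _ = n := Fintype.card_fin n
    · intro c'
      set c : (j : Fin n) → Fin (ℓ j) :=
        Function.update (fun j => if hne : j ≠ k then c' ⟨j, hne⟩ else ⟨0, hℓ j⟩) k i₀
        with hcdef
      have main := hα c
      set F : Empty ⊕ ({j : Fin n // j ≠ k} ⊕ Unit) → Fin n :=
        Sum.elim (fun e => e.elim) (Sum.elim (fun j' => j'.val) (fun _ => k)) with hFdef
      have hFinj : Function.Injective F := by
        rintro (e | (j₁ | ⟨⟩)) y hxy
        · exact e.elim
        · rcases y with e | (j₂ | ⟨⟩)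
          · exact e.elim
          · rw [hFdef] at hxy
            simp only [Sum.elim_inl, Sum.elim_inr] at hxy
            exact congrArg (fun t => Sum.inr (Sum.inl t)) (Subtype.ext hxy)
          · rw [hFdef] at hxy
            simp only [Sum.elim_inl, Sum.elim_inr] at hxy
            exact absurd hxy j₁.2
        · rcases y with e | (j₂ | ⟨⟩)
          · exact e.elim
          · rw [hFdef] at hxy
            simp only [Sum.elim_inl, Sum.elim_inr] at hxy
            exact absurd hxy.symm j₂.2
          · rfl
      have hkey : ∀ x, (Sum.elim (fun e : Empty => e.elim)
          (Sum.elim (fun j' : {j : Fin n // j ≠ k} => L j'.val (c' j'))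
            (fun _ : Unit => L k i₀))) x = (fun j => L j (c j)) (F x) := by
        rintro (e | (j' | ⟨⟩))
        · exact e.elim
        · rw [hFdef]
          show L j'.val (c' j') = L j'.val (c j'.val)
          have hcval : c j'.val = c' j' := by
            rw [hcdef, Function.update_of_ne j'.2, dif_pos j'.2]
          exact congrArg (L j'.val) hcval.symm
        · rw [hFdef]
          show L k i₀ = L k (c k)
          have hck : c k = i₀ := by rw [hcdef, Function.update_self]
          rw [hck]
      have hfe : (Sum.elim (fun e : Empty => e.elim)
          (Sum.elim (fun j' : {j : Fin n // j ≠ k} => L j'.val (c' j'))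
            (fun _ : Unit => L k i₀))) = (fun j => L j (c j)) ∘ F := funext hkey
      rw [hfe]
      exact main.comp F hFinj
  apply le_antisymm
  · refine Ideal.span_le.mpr ?_
    rintro g ⟨i, j, hij, rfl⟩
    refine (Submodule.mem_iInf _).mpr (fun k => ?_)
    rcases ne_or_eq i k with hik | rfl
    · exact Ideal.mul_mem_right _ _ (Ideal.subset_span ⟨i, hik, rfl⟩)
    · have hjk : j ≠ i := (ne_of_lt hij).symm
      exact Ideal.mul_mem_left _ _ (Ideal.subset_span ⟨j, hjk, rfl⟩)
  · have hmain := inter_le_pairwise (R := MvPolynomial (Fin (n + 1)) K) n (Fin n)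
      inferInstance ⟨⟨0, by omega⟩⟩ (by rw [Fintype.card_fin]) f ⊥
      (by
        intro k h hh
        rw [bot_sup_eq] at hh ⊢
        exact hreg0 k h hh)
    simp only [bot_sup_eq] at hmain
    rw [← hspan]
    exact hmain
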